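/- Let X_1, …, X_k with k ≥ 2 be pairwise disjoint nonempty closed subsets of Euclidean space ℝⁿ (n ≥ 1). Then the Hausdorff dimension of the conflict set satisfies dimH(Conf(X)) ≥ n − 1. (This is the lower-dimension half of the statement that definable conflict sets in ℝⁿ have dimension exactly n − 1; the lower bound holds with no definability assumption.) -/

import Mathlib

open Metric Set MeasureTheory

/-- The territory of the set `X i` within the collection `X`. -/
def Ter {n k : ℕ} (X : Fin k → Set (EuclideanSpace ℝ (Fin n))) (i : Fin k) :
    Set (EuclideanSpace ℝ (Fin n)) :=
  {x | ∀ j, Metric.infDist x (X i) ≤ Metric.infDist x (X j)}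

/-- The conflict set of the collection `X`. -/
def Conf {n k : ℕ} (X : Fin k → Set (EuclideanSpace ℝ (Fin n))) :
    Set (EuclideanSpace ℝ (Fin n)) :=
  {x | ∃ i j, i ≠ j ∧ x ∈ Ter X i ∧ x ∈ Ter X j}

theorem dimH_conf_ge {n k : ℕ} (hn : 1 ≤ n) (hk : 2 ≤ k)
    (X : Fin k → Set (EuclideanSpace ℝ (Fin n)))
    (hdisj : ∀ i j, i ≠ j → Disjoint (X i) (X j))
    (hne : ∀ i, (X i).Nonempty)
    (hcl : ∀ i, IsClosed (X i)) :
    (n : ENNReal) - 1 ≤ dimH (Conf X) := by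
  classical
  let E := EuclideanSpace ℝ (Fin n)
  set i0 : Fin k := ⟨0, by omega⟩ with hi0def
  set i1 : Fin k := ⟨1, by omega⟩ with hi1def
  have hi01 : i0 ≠ i1 := by simp [hi0def, hi1def, Fin.ext_iff]
  obtain ⟨a, ha⟩ := hne i0
  obtain ⟨b, hb⟩ := hne i1
  have hab : b - a ≠ 0 := by
    intro h
    exact (hdisj i0 i1 hi01).ne_of_mem ha hb (sub_eq_zero.mp h).symm
  -- the open set where `X i0` is the strict minimizer
  set U : Set E := {x | ∀ j, j ≠ i0 → Metric.infDist x (X i0) < Metric.infDist x (X j)}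
    with hUdef
  have hUopen : IsOpen U := by
    have hU : U = ⋂ j, {x : E | j ≠ i0 → Metric.infDist x (X i0) < Metric.infDist x (X j)} := by
      ext x; simp [hUdef]
    rw [hU]
    refine isOpen_iInter_of_finite fun j => ?_
    by_cases hj : j = i0
    · simp [hj]
    · simpa [hj] using
        isOpen_lt (continuous_infDist_pt (X i0)) (continuous_infDist_pt (X j))
  -- membership facts
  have hmemU : ∀ x i, x ∈ X i →
      ∀ j, j ≠ i → Metric.infDist x (X i) < Metric.infDist x (X j) := by
    intro x i hx j hj
    have h0 : Metric.infDist x (X i) = 0 := infDist_zero_of_mem hx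
    have hxj : x ∉ X j := fun hxj => (hdisj j i hj).ne_of_mem hxj hx rfl
    have := ((hcl j).notMem_iff_infDist_pos (hne j)).mp hxj
    linarith
  have haU : a ∈ U := fun j hj => hmemU a i0 ha j hj
  -- Territories are closed, closure of U is inside `Ter X i0`
  have hUsub : U ⊆ Ter X i0 := by
    intro x hx j
    by_cases hj : j = i0
    · subst hj; exact le_rfl
    · exact (hx j hj).le
  have hTerCl : IsClosed (Ter X i0) := by
    have : Ter X i0 = ⋂ j, {x : E | Metric.infDist x (X i0) ≤ Metric.infDist x (X j)} := by
      ext x; simp [Ter]; rfl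
    rw [this]
    exact isClosed_iInter fun j =>
      isClosed_le (continuous_infDist_pt (X i0)) (continuous_infDist_pt (X j))
  have hclU : closure U ⊆ Ter X i0 := closure_minimal hUsub hTerCl
  -- the frontier of U is inside the conflict set
  have hfr : frontier U ⊆ Conf X := by
    intro x hx
    have hx1 : x ∈ closure U := frontier_subset_closure hx
    have hx2 : x ∉ U := by
      rw [hUopen.frontier_eq] at hx; exact hx.2
    have hTer0 : x ∈ Ter X i0 := hclU hx1
    simp only [hUdef, mem_setOf_eq, not_forall] at hx2
    obtain ⟨j, hj, hle⟩ := hx2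
    push_neg at hle
    refine ⟨j, i0, hj, fun j' => le_trans hle (hTer0 j'), hTer0⟩
  -- the open set where `X i1` beats `X i0`; it misses the closure of U
  set V : Set E := {x | Metric.infDist x (X i1) < Metric.infDist x (X i0)} with hVdef
  have hVopen : IsOpen V :=
    isOpen_lt (continuous_infDist_pt (X i1)) (continuous_infDist_pt (X i0))
  have hbV : b ∈ V := hmemU b i1 hb i0 hi01
  have hVU : Disjoint V U := by
    rw [Set.disjoint_left]
    intro x hxV hxU
    exact absurd (hxU i1 (Ne.symm hi01)) (not_lt.mpr hxV.le)
  have hVclU : Disjoint V (closure U) := hVU.closure_right hVopen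
  -- choose ε
  obtain ⟨ε₁, hε₁, hballa⟩ := Metric.isOpen_iff.mp hUopen a haU
  obtain ⟨ε₂, hε₂, hballb⟩ := Metric.isOpen_iff.mp hVopen b hbV
  set ε : ℝ := min ε₁ ε₂ with hεdef
  have hε : 0 < ε := lt_min hε₁ hε₂
  -- the orthogonal complement of b - a
  set K : Submodule ℝ E := (ℝ ∙ (b - a))ᗮ with hKdef
  have hKrank : Module.finrank ℝ K = n - 1 := by
    refine Submodule.finrank_add_finrank_orthogonal' ?_
    rw [finrank_span_singleton hab, finrank_euclideanSpace_fin]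
    omega
  -- the Lipschitz projection
  set π : E → K := fun x => K.orthogonalProjection (x - a) with hπdef
  have h1lip : LipschitzWith 1 (fun x : E => x - a) := by
    simpa [sub_eq_add_neg] using (isometry_add_right (-a)).lipschitz
  have hπlip := (K.orthogonalProjection).lipschitz.comp h1lip
  -- every small w in K lies in the image of the conflict set
  have hsurj : ∀ w : K, ‖w‖ < ε → (w : K) ∈ π '' (Conf X) := by
    intro w hw
    have hw1 : ‖(w : E)‖ < ε₁ := lt_of_lt_of_le hw (min_le_left _ _)
    have hw2 : ‖(w : E)‖ < ε₂ := lt_of_lt_of_le hw (min_le_right _ _)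
    have hawU : a + (w : E) ∈ U := by
      apply hballa
      simpa [Metric.mem_ball, dist_eq_norm] using hw1
    have hbwV : b + (w : E) ∈ V := by
      apply hballb
      simpa [Metric.mem_ball, dist_eq_norm] using hw2
    -- the segment from a+w to b+w crosses the frontier of U
    have hscon : IsPreconnected (segment ℝ (a + (w : E)) (b + (w : E))) :=
      (convex_segment _ _).isPreconnected
    have hcross : ∃ c ∈ segment ℝ (a + (w : E)) (b + (w : E)), c ∈ frontier U := by
      by_contra hcon
      push_neg at hcon
      have hsub : segment ℝ (a + (w : E)) (b + (w : E)) ⊆ U ∪ (closure U)ᶜ := by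
        intro x hx
        by_cases hxc : x ∈ closure U
        · left
          by_contra hxU
          exact hcon x hx (by rw [hUopen.frontier_eq]; exact ⟨hxc, hxU⟩)
        · right; exact hxc
      obtain ⟨x, _, hxU, hxc⟩ := hscon U (closure U)ᶜ hUopen (isClosed_closure.isOpen_compl)
        hsub ⟨a + (w : E), left_mem_segment _ _ _, hawU⟩
        ⟨b + (w : E), right_mem_segment _ _ _, fun hc => (hVclU.ne_of_mem hbwV hc) rfl⟩
      exact hxc (subset_closure hxU)
    obtain ⟨c, hcs, hcf⟩ := hcross
    refine ⟨c, hfr hcf, ?_⟩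
    -- compute π c = w
    rw [segment_eq_image'] at hcs
    obtain ⟨t, _, hct⟩ := hcs
    have hca : c - a = (w : E) + t • (b - a) := by
      rw [← hct]; module
    rw [hπdef]
    show K.orthogonalProjection (c - a) = w
    rw [hca, map_add, _root_.map_smul, Submodule.orthogonalProjectionOnto_mem_subspace_eq_self,
      Submodule.orthogonalProjectionOnto_orthogonal_apply_eq_zero
        (Submodule.mem_span_singleton_self (b - a))]
    simp
  -- conclude
  have hball : Metric.ball (0 : K) ε ⊆ π '' (Conf X) := fun w hw =>
    hsurj w (by simpa [mem_ball_zero_iff] using hw)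
  have h1 : dimH (Metric.ball (0 : K) ε) = (Module.finrank ℝ K : ENNReal) :=
    Real.dimH_of_mem_nhds (Metric.ball_mem_nhds _ hε)
  have h2 : dimH (Metric.ball (0 : K) ε) ≤ dimH (π '' (Conf X)) := dimH_mono hball
  have h3 : dimH (π '' (Conf X)) ≤ dimH (Conf X) := hπlip.dimH_image_le _
  have hfin : ((n - 1 : ℕ) : ENNReal) ≤ dimH (Conf X) := by
    have h4 := le_trans h2 h3
    rw [h1, hKrank] at h4
    exact h4
  have hcast : (n : ENNReal) - 1 = ((n - 1 : ℕ) : ENNReal) := by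
    rw [ENNReal.natCast_sub, Nat.cast_one]
  rw [hcast]
  exact hfin
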